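/- Let x be a random vector with known mean x̄ and covariance Σ, H a matrix with rows Hⱼ and k a vector with entries kⱼ, and for each j let αⱼ ∈ [0,1) and δⱼ > 0 with ∑ⱼ αⱼ ≤ β. If Hⱼ x̄ ≤ kⱼ − δⱼ and Hⱼ Σ Hⱼᵀ ≤ αⱼ δⱼ²/(1 − αⱼ) for every j, then Pr[H x ≤ k] ≥ 1 − β. -/

import Mathlib

open MeasureTheory Matrix

lemma memL2_mul_integrable {Ω : Type*} [MeasurableSpace Ω] {μ : Measure Ω}
    {f g : Ω → ℝ} (hf : MemLp f 2 μ) (hg : MemLp g 2 μ) :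
    Integrable (fun ω => f ω * g ω) μ := by
  have h1 : Integrable (fun ω => (f ω + g ω) ^ 2) μ := (hf.add hg).integrable_sq
  have h2 := hf.integrable_sq
  have h3 := hg.integrable_sq
  have h4 : Integrable (fun ω => ((f ω + g ω) ^ 2 - f ω ^ 2 - g ω ^ 2) / 2) μ :=
    ((h1.sub h2).sub h3).div_const 2
  convert h4 using 2 with ω
  ring

lemma cantelli_aux {Ω : Type*} [MeasurableSpace Ω] (μ : Measure Ω) [IsProbabilityMeasure μ]
    {f : Ω → ℝ} (hf : MemLp f 2 μ) (hmean : ∫ ω, f ω ∂μ = 0)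
    {t u : ℝ} (ht : 0 < t) (hu : 0 ≤ u) :
    (t + u) ^ 2 * (μ {ω | t ≤ f ω}).toReal ≤ (∫ ω, (f ω) ^ 2 ∂μ) + u ^ 2 := by
  have hg : MemLp (fun ω => f ω + u) 2 μ := hf.add (memLp_const u)
  have hgint : Integrable (fun ω => (f ω + u) ^ 2) μ := hg.integrable_sq
  have hsub : {ω | t ≤ f ω} ⊆ {ω | (t + u) ^ 2 ≤ (f ω + u) ^ 2} := by
    intro ω hω
    have : t + u ≤ f ω + u := by simpa using hω
    exact pow_le_pow_left₀ (by positivity) this 2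
  have hmarkov := mul_meas_ge_le_integral_of_nonneg
    (ae_of_all μ fun ω => sq_nonneg (f ω + u)) hgint ((t + u) ^ 2)
  have hmono : (μ {ω | t ≤ f ω}).toReal ≤ (μ {ω | (t + u) ^ 2 ≤ (f ω + u) ^ 2}).toReal :=
    ENNReal.toReal_mono (measure_ne_top μ _) (measure_mono hsub)
  have hint : ∫ ω, (f ω + u) ^ 2 ∂μ = (∫ ω, (f ω) ^ 2 ∂μ) + u ^ 2 := by
    have h2 := hf.integrable_sq
    have h3 : Integrable (fun ω => 2 * u * f ω) μ := (hf.integrable one_le_two).const_mul _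
    have e1 : ∫ ω, (f ω + u) ^ 2 ∂μ = ∫ ω, ((f ω) ^ 2 + 2 * u * f ω + (u:ℝ) ^ 2) ∂μ := by
      congr 1; funext ω; ring
    rw [e1, integral_add (show Integrable (fun ω => f ω ^ 2 + 2 * u * f ω) μ from h2.add h3) (integrable_const _), integral_add h2 h3,
      integral_const, integral_const_mul, hmean]
    simp
  calc (t + u) ^ 2 * (μ {ω | t ≤ f ω}).toReal
      ≤ (t + u) ^ 2 * (μ {ω | (t + u) ^ 2 ≤ (f ω + u) ^ 2}).toReal :=
        mul_le_mul_of_nonneg_left hmono (by positivity)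
    _ ≤ ∫ ω, (f ω + u) ^ 2 ∂μ := hmarkov
    _ = _ := hint

/-- Combination of the Cantelli–Chebyshev relaxation of individual chance constraints
with Boole's inequality (equations (19)–(20) of the paper): if for each row `j`,
`Hⱼ x̄ ≤ kⱼ − δⱼ` and `Hⱼ Σ Hⱼᵀ ≤ αⱼδⱼ²/(1 − αⱼ)` with `αⱼ ∈ [0,1)`, `δⱼ > 0`, and
`∑ⱼ αⱼ ≤ β`, then `Pr[Hx ≤ k] ≥ 1 − β`. -/
theorem jcc_cantelli_bound {Ω : Type*} [MeasurableSpace Ω] (μ : Measure Ω)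
    [IsProbabilityMeasure μ] {n r : ℕ} (x : Ω → Fin n → ℝ)
    (hxm : ∀ i, Measurable (fun ω => x ω i))
    (hx : ∀ i, MemLp (fun ω => x ω i) 2 μ)
    (xbar : Fin n → ℝ) (hxbar : ∀ i, xbar i = ∫ ω, x ω i ∂μ)
    (S : Matrix (Fin n) (Fin n) ℝ)
    (hS : ∀ i j, S i j = ∫ ω, (x ω i - xbar i) * (x ω j - xbar j) ∂μ)
    (H : Matrix (Fin r) (Fin n) ℝ) (k : Fin r → ℝ)
    (α δ : Fin r → ℝ) (β : ℝ)
    (hα : ∀ j, 0 ≤ α j ∧ α j < 1) (hδ : ∀ j, 0 < δ j) (hsum : ∑ j, α j ≤ β)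
    (hmean : ∀ j, (H *ᵥ xbar) j ≤ k j - δ j)
    (hvar : ∀ j, (H *ᵥ (S *ᵥ (fun i => H j i))) j ≤ α j * (δ j) ^ 2 / (1 - α j)) :
    1 - β ≤ (μ {ω | ∀ j, (H *ᵥ x ω) j ≤ k j}).toReal := by
  -- centered variables
  set c : Fin n → Ω → ℝ := fun i ω => x ω i - xbar i with hc
  have hcL2 : ∀ i, MemLp (c i) 2 μ := fun i => (hx i).sub (memLp_const _)
  have hcmean : ∀ i, ∫ ω, c i ω ∂μ = 0 := by
    intro i
    have h1 : Integrable (fun ω => x ω i) μ := (hx i).integrable one_le_two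
    have : ∫ ω, (x ω i - xbar i) ∂μ = (∫ ω, x ω i ∂μ) - xbar i := by
      rw [integral_sub h1 (integrable_const _), integral_const]
      simp
    simpa [hc, hxbar i] using this
  -- row functions
  set g : Fin r → Ω → ℝ := fun j ω => ∑ i, H j i * c i ω with hg
  have hgL2 : ∀ j, MemLp (g j) 2 μ := by
    intro j
    exact memLp_finset_sum _ fun i _ => (hcL2 i).const_mul _
  have hgmean : ∀ j, ∫ ω, g j ω ∂μ = 0 := by
    intro j
    rw [integral_finset_sum _ fun i _ => ((hcL2 i).integrable one_le_two).const_mul _]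
    simp only [integral_const_mul]
    simp [hcmean]
  have hgvar : ∀ j, ∫ ω, (g j ω) ^ 2 ∂μ = (H *ᵥ (S *ᵥ (fun i => H j i))) j := by
    intro j
    have e1 : ∀ ω, (g j ω) ^ 2 = ∑ i, ∑ l, H j i * H j l * (c i ω * c l ω) := by
      intro ω
      rw [hg, sq, Finset.sum_mul_sum]
      exact Finset.sum_congr rfl fun i _ => Finset.sum_congr rfl fun l _ => by ring
    simp_rw [e1]
    rw [integral_finset_sum _ fun i _ => integrable_finset_sum _ fun l _ =>
      (memL2_mul_integrable (hcL2 i) (hcL2 l)).const_mul _]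
    have e2 : ∀ i, ∫ ω, ∑ l, H j i * H j l * (c i ω * c l ω) ∂μ
        = ∑ l, H j i * H j l * S i l := by
      intro i
      rw [integral_finset_sum _ fun l _ =>
        (memL2_mul_integrable (hcL2 i) (hcL2 l)).const_mul _]
      exact Finset.sum_congr rfl fun l _ => by rw [integral_const_mul, hS i l]
    simp_rw [e2]
    simp only [mulVec, dotProduct]
    exact Finset.sum_congr rfl fun i _ => by
      rw [Finset.mul_sum]
      exact Finset.sum_congr rfl fun l _ => by ring
  -- per-row Cantelli bound
  set t : Fin r → ℝ := fun j => k j - (H *ᵥ xbar) j with ht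
  have htδ : ∀ j, δ j ≤ t j := fun j => by have := hmean j; simp [ht]; linarith
  have hrow : ∀ j, (μ {ω | t j ≤ g j ω}).toReal ≤ α j := by
    intro j
    obtain ⟨ha0, ha1⟩ := hα j
    have hd := hδ j
    have ht0 : 0 < t j := lt_of_lt_of_le hd (htδ j)
    set u : ℝ := α j * δ j / (1 - α j) with hu
    have h1a : 0 < 1 - α j := by linarith
    have hu0 : 0 ≤ u := by positivity
    have hue : (1 - α j) * u = α j * δ j := by
      rw [hu]; field_simp
    have hcant := cantelli_aux μ (hgL2 j) (hgmean j) ht0 hu0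
    have hv : ∫ ω, (g j ω) ^ 2 ∂μ ≤ α j * (δ j) ^ 2 / (1 - α j) := (hgvar j) ▸ hvar j
    have hv' : (∫ ω, (g j ω) ^ 2 ∂μ) * (1 - α j) ≤ α j * (δ j) ^ 2 := by
      have := (le_div_iff₀ h1a).mp hv
      linarith
    have h5 : (∫ ω, (g j ω) ^ 2 ∂μ) ≤ u * δ j := by nlinarith [hv', hue]
    have e3 : (1 - α j) * u * u = α j * δ j * u := by rw [hue]
    have e4 : (1 - α j) * u * δ j = α j * δ j * δ j := by rw [hue]
    have hprod : 0 ≤ α j * (t j - δ j) * (t j + δ j + 2 * u) :=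
      mul_nonneg (mul_nonneg ha0 (sub_nonneg.mpr (htδ j))) (by linarith [htδ j, hd])
    have hkey : (∫ ω, (g j ω) ^ 2 ∂μ) + u ^ 2 ≤ α j * (t j + u) ^ 2 := by
      nlinarith [h5, e3, e4, hprod]
    have hpos : (0:ℝ) < (t j + u) ^ 2 := by positivity
    have := hcant.trans hkey
    exact le_of_mul_le_mul_left (by linarith [this]) hpos
  -- union bound
  set A : Set Ω := {ω | ∀ j, (H *ᵥ x ω) j ≤ k j} with hA
  have hgrel : ∀ j ω, g j ω = (H *ᵥ x ω) j - (H *ᵥ xbar) j := by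
    intro j ω
    simp only [hg, hc, mulVec, dotProduct, ← Finset.sum_sub_distrib]
    exact Finset.sum_congr rfl fun i _ => by ring
  have hsubset : Aᶜ ⊆ ⋃ j, {ω | t j ≤ g j ω} := by
    intro ω hω
    simp only [hA, Set.mem_compl_iff, Set.mem_setOf_eq, not_forall] at hω
    obtain ⟨j, hj⟩ := hω
    exact Set.mem_iUnion.mpr ⟨j, by simp only [Set.mem_setOf_eq, hgrel, ht]; linarith⟩
  have hAm : MeasurableSet A := by
    have : A = ⋂ j, {ω | (H *ᵥ x ω) j ≤ k j} := by
      ext ω; simp [hA]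
    rw [this]
    refine MeasurableSet.iInter fun j => ?_
    have hm : Measurable fun ω => (H *ᵥ x ω) j := by
      simp only [mulVec, dotProduct]
      exact Finset.measurable_sum _ fun i _ => (hxm i).const_mul _
    exact measurableSet_le hm measurable_const
  have hcompl : (μ Aᶜ).toReal ≤ β := by
    have h1 : μ Aᶜ ≤ ∑ j, μ {ω | t j ≤ g j ω} :=
      (measure_mono hsubset).trans (measure_iUnion_fintype_le _ _)
    have h2 : (μ Aᶜ).toReal ≤ (∑ j, μ {ω | t j ≤ g j ω}).toReal :=
      ENNReal.toReal_mono (ENNReal.sum_ne_top.mpr fun j _ => measure_ne_top μ _) h1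
    rw [ENNReal.toReal_sum fun j _ => measure_ne_top μ _] at h2
    calc (μ Aᶜ).toReal ≤ ∑ j, (μ {ω | t j ≤ g j ω}).toReal := h2
      _ ≤ ∑ j, α j := Finset.sum_le_sum fun j _ => hrow j
      _ ≤ β := hsum
  have hsplit : (μ A).toReal + (μ Aᶜ).toReal = 1 := by
    have := prob_add_prob_compl (μ := μ) hAm
    have h := congrArg ENNReal.toReal this
    rwa [ENNReal.toReal_add (measure_ne_top μ _) (measure_ne_top μ _), ENNReal.toReal_one] at h
  linarith
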